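/- Let A ∈ ℝ^{ℓ×n} be a nonzero matrix whose set of column vectors has convex hull conv(A), and suppose 0 lies in the relative interior of conv(A). Then for every v ∈ ℝ^ℓ, the function J·v: ℂⁿ → ℝ, z ↦ Σ_{i,j} v_i a_{ij}|z_j|², is either identically zero or attains both strictly positive and strictly negative values. -/

import Mathlib

lemma neg_smul_mem_of_zero_mem_intrinsicInterior {m : ℕ} {S : Set (Fin m → ℝ)}
    (h0 : (0 : Fin m → ℝ) ∈ intrinsicInterior ℝ S) {p : Fin m → ℝ} (hp : p ∈ S) :
    ∃ ε : ℝ, 0 < ε ∧ (-ε) • p ∈ S := by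
  obtain ⟨q, hq, hq0⟩ := mem_intrinsicInterior.1 h0
  have h0E : (0 : Fin m → ℝ) ∈ affineSpan ℝ S := hq0 ▸ q.2
  have hpE : p ∈ affineSpan ℝ S := subset_affineSpan ℝ S hp
  have hmem : ∀ t : ℝ, t • p ∈ affineSpan ℝ S := by
    intro t
    have := AffineSubspace.smul_vsub_vadd_mem (affineSpan ℝ S) t hpE h0E h0E
    simpa using this
  set γ : ℝ → affineSpan ℝ S := fun t => ⟨t • p, hmem t⟩ with hγ
  have hcont : Continuous γ := by
    apply Continuous.subtype_mk
    exact continuous_id.smul continuous_const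
  have hγ0 : γ 0 = q := by
    apply Subtype.ext
    simp [hγ, hq0]
  have hopen : IsOpen (γ ⁻¹' interior (((↑) : affineSpan ℝ S → _) ⁻¹' S)) :=
    isOpen_interior.preimage hcont
  have h0mem : (0 : ℝ) ∈ γ ⁻¹' interior (((↑) : affineSpan ℝ S → _) ⁻¹' S) := by
    simp only [Set.mem_preimage, hγ0]; exact hq
  obtain ⟨δ, hδ, hball⟩ := Metric.isOpen_iff.1 hopen 0 h0mem
  refine ⟨δ/2, by linarith, ?_⟩
  have : (-(δ/2)) ∈ Metric.ball (0:ℝ) δ := by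
    simp [Real.dist_eq]
    rw [abs_of_nonneg (by linarith)]; linarith
  have := interior_subset (hball this)
  simpa [hγ] using this

lemma key_all_zero {ℓ n : ℕ} (A : Matrix (Fin ℓ) (Fin n) ℝ)
    (h0 : (0 : Fin ℓ → ℝ) ∈
      intrinsicInterior ℝ (convexHull ℝ (Set.range fun j i => A i j)))
    (v : Fin ℓ → ℝ) (hv : ∀ j, 0 ≤ ∑ i, v i * A i j) :
    ∀ j, ∑ i, v i * A i j = 0 := by
  set S := convexHull ℝ (Set.range fun j i => A i j) with hSdef
  have hS : ∀ x ∈ S, 0 ≤ ∑ i, v i * x i := by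
    intro x hx
    have hsub : S ⊆ {x : Fin ℓ → ℝ | 0 ≤ ∑ i, v i * x i} := by
      apply convexHull_min
      · rintro x ⟨j, rfl⟩
        exact hv j
      · intro x hx y hy a b ha hb hab
        simp only [Set.mem_setOf_eq] at *
        have : ∑ i, v i * (a • x + b • y) i
            = a * ∑ i, v i * x i + b * ∑ i, v i * y i := by
          simp only [Pi.add_apply, Pi.smul_apply, smul_eq_mul, Finset.mul_sum]
          rw [← Finset.sum_add_distrib]
          exact Finset.sum_congr rfl fun i _ => by ring
        rw [this]
        positivity
    exact hsub hx
  intro j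
  refine le_antisymm ?_ (hv j)
  by_contra hgt
  push_neg at hgt
  have hp : (fun i => A i j) ∈ S := subset_convexHull ℝ _ ⟨j, rfl⟩
  obtain ⟨ε, hε, hmem⟩ := neg_smul_mem_of_zero_mem_intrinsicInterior h0 hp
  have hge := hS _ hmem
  have heq : ∑ i, v i * ((-ε) • fun i => A i j) i = -ε * ∑ i, v i * A i j := by
    simp only [Pi.smul_apply, smul_eq_mul, Finset.mul_sum]
    exact Finset.sum_congr rfl fun i _ => by ring
  rw [heq] at hge
  nlinarith

/-- If A ≠ 0 and 0 lies in the relative interior of the convex hull of the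
columns of A, then for every v the function z ↦ Σ_{i,j} v_i a_{ij}|z_j|² on ℂⁿ is identically
zero or attains both strictly positive and strictly negative values. -/
theorem sign_change_of_zero_mem_relint {ℓ n : ℕ} (A : Matrix (Fin ℓ) (Fin n) ℝ)
    (hA : A ≠ 0)
    (h0 : (0 : Fin ℓ → ℝ) ∈
      intrinsicInterior ℝ (convexHull ℝ (Set.range fun j i => A i j))) :
    ∀ v : Fin ℓ → ℝ,
      (∀ z : Fin n → ℂ, ∑ i, ∑ j, v i * A i j * Complex.normSq (z j) = 0) ∨
      ((∃ z : Fin n → ℂ, 0 < ∑ i, ∑ j, v i * A i j * Complex.normSq (z j)) ∧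
       (∃ z : Fin n → ℂ, ∑ i, ∑ j, v i * A i j * Complex.normSq (z j) < 0)) := by
  intro v
  set c : Fin n → ℝ := fun j => ∑ i, v i * A i j with hc
  have hswap : ∀ z : Fin n → ℂ, ∑ i, ∑ j, v i * A i j * Complex.normSq (z j)
      = ∑ j, c j * Complex.normSq (z j) := by
    intro z
    rw [Finset.sum_comm]
    exact Finset.sum_congr rfl fun j _ => by rw [hc, Finset.sum_mul]
  have hval : ∀ j : Fin n, ∑ i, ∑ j',
      v i * A i j' * Complex.normSq ((fun k => if k = j then 1 else 0) j') = c j := by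
    intro j
    rw [hswap]
    rw [Finset.sum_eq_single j]
    · simp
    · intro b _ hb
      simp [hb]
    · simp
  by_cases hall : ∀ j, c j = 0
  · left
    intro z
    rw [hswap]
    simp [hall]
  · right
    push_neg at hall
    obtain ⟨j₀, hj₀⟩ := hall
    have hneg : ∃ j, c j < 0 := by
      by_contra h
      push_neg at h
      exact hj₀ (key_all_zero A h0 v h j₀)
    have hpos : ∃ j, 0 < c j := by
      by_contra h
      push_neg at h
      have hz := key_all_zero A h0 (-v) (fun j => by
        have heq : ∑ i, (-v) i * A i j = -c j := by
          rw [hc, ← Finset.sum_neg_distrib]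
          exact Finset.sum_congr rfl fun i _ => by rw [Pi.neg_apply]; ring
        rw [heq]; linarith [h j])
      apply hj₀
      have heq : ∑ i, (-v) i * A i j₀ = -c j₀ := by
        rw [hc, ← Finset.sum_neg_distrib]
        exact Finset.sum_congr rfl fun i _ => by rw [Pi.neg_apply]; ring
      have := hz j₀
      rw [heq] at this
      linarith
    obtain ⟨j₁, hj₁⟩ := hpos
    obtain ⟨j₂, hj₂⟩ := hneg
    exact ⟨⟨fun k => if k = j₁ then 1 else 0, by rw [hval j₁]; exact hj₁⟩,
           ⟨fun k => if k = j₂ then 1 else 0, by rw [hval j₂]; exact hj₂⟩⟩
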